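/- Let (X,d) be a metric space, let K ⊆ X be nonempty compact, let u be a normal fuzzy set on X, and let ε > 0. If ε < min{d_S(χ_K, u), 1}, then there exists a level α ∈ [0, 1−ε] such that the Hausdorff distance satisfies d_H(K, u_α) > ε (where u_α denotes the α-level for α > 0 and u₀ for α = 0). -/

import Mathlib

open Metric Set

/-- A normal fuzzy set on a metric space: an upper semicontinuous function `u : X → [0,1]`
whose support-closure `u₀` is compact and whose core `u₁` is nonempty. -/
structure NormalFuzzySet (X : Type*) [MetricSpace X] where
  toFun : X → ℝ
  mem_Icc' : ∀ x, toFun x ∈ Set.Icc (0 : ℝ) 1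
  upperSemicontinuous' : UpperSemicontinuous toFun
  isCompact_closure_support' : IsCompact (closure {x | 0 < toFun x})
  core_nonempty' : {x | 1 ≤ toFun x}.Nonempty

namespace NormalFuzzySet

variable {X : Type*} [MetricSpace X]

/-- The α-level of a normal fuzzy set: `u₀` (the closure of the support) for `α ≤ 0`,
and `{x | u x ≥ α}` for `α > 0`. -/
noncomputable def level (u : NormalFuzzySet X) (α : ℝ) : Set X :=
  if α ≤ 0 then closure {x | 0 < u.toFun x} else {x | α ≤ u.toFun x}

/-- The sendograph of a normal fuzzy set, a subset of `X × ℝ`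
(whose product metric is exactly `d̄((x,α),(y,β)) = max (d x y) |α - β|`). -/
def sendograph (u : NormalFuzzySet X) : Set (X × ℝ) :=
  {p : X × ℝ | p.1 ∈ closure {x | 0 < u.toFun x} ∧ 0 ≤ p.2 ∧ p.2 ≤ u.toFun p.1}

/-- The endograph of a normal fuzzy set. -/
def endograph (u : NormalFuzzySet X) : Set (X × ℝ) :=
  {p : X × ℝ | 0 ≤ p.2 ∧ p.2 ≤ u.toFun p.1}

end NormalFuzzySet


/-- If `0 < ε < min{d_S(χ_K, u), 1}`, then `d_H(K, u_α) > ε` for some `α ∈ [0, 1 - ε]`.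
Here `d_S(χ_K, u)` is the Hausdorff distance between `send(χ_K) = K × [0,1]` and
`send(u)` in `X × ℝ`. -/
theorem exists_level_hausdorffDist_gt_of_lt_sendographDist {X : Type*} [MetricSpace X]
    (K : Set X) (hK : IsCompact K) (hKne : K.Nonempty) (u : NormalFuzzySet X) (ε : ℝ)
    (hε : 0 < ε) (hεS : ε < hausdorffDist (K ×ˢ Icc (0 : ℝ) 1) u.sendograph) (hε1 : ε < 1) :
    ∃ α ∈ Icc (0 : ℝ) (1 - ε), ε < hausdorffDist K (u.level α) := by
  by_contra hcon
  push_neg at hcon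
  have hub : ∀ x, u.toFun x ≤ 1 := fun x => (u.mem_Icc' x).2
  have hlb : ∀ x, 0 ≤ u.toFun x := fun x => (u.mem_Icc' x).1
  have hScomp : IsCompact (closure {x | 0 < u.toFun x}) := u.isCompact_closure_support'
  have hlevel_sub : ∀ α, u.level α ⊆ closure {x | 0 < u.toFun x} := by
    intro α x hx
    unfold NormalFuzzySet.level at hx
    split at hx
    · exact hx
    · next h0 => exact subset_closure (lt_of_lt_of_le (lt_of_not_ge h0) hx)
  have hlevel_closed : ∀ α, IsClosed (u.level α) := by
    intro α
    unfold NormalFuzzySet.level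
    split
    · exact isClosed_closure
    · have ho : IsOpen {x | u.toFun x < α} :=
        upperSemicontinuous_iff_isOpen_preimage.mp u.upperSemicontinuous' α
      have he : {x | α ≤ u.toFun x} = {x | u.toFun x < α}ᶜ := by
        ext x; simp [not_lt]
      rw [he]
      exact ho.isClosed_compl
  have hlevel_comp : ∀ α, IsCompact (u.level α) := fun α =>
    hScomp.of_isClosed_subset (hlevel_closed α) (hlevel_sub α)
  have hlevel_ne : ∀ α ≤ 1, (u.level α).Nonempty := by
    intro α hα
    obtain ⟨c, hc⟩ := u.core_nonempty'
    refine ⟨c, ?_⟩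
    unfold NormalFuzzySet.level
    split
    · exact subset_closure (by simpa using lt_of_lt_of_le one_pos hc)
    · exact le_trans hα hc
  have hfin : ∀ α ∈ Icc (0:ℝ) (1 - ε), EMetric.hausdorffEdist K (u.level α) ≠ ⊤ := by
    intro α hα
    exact Metric.hausdorffEdist_ne_top_of_nonempty_of_bounded hKne
      (hlevel_ne α (by linarith [hα.2])) hK.isBounded (hlevel_comp α).isBounded
  have key1 : ∀ α ∈ Icc (0:ℝ) (1 - ε), ∀ x ∈ K, ∃ y ∈ u.level α, dist x y ≤ ε := by
    intro α hα x hx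
    have h1 : infDist x (u.level α) ≤ ε :=
      le_trans (infDist_le_hausdorffDist_of_mem hx (hfin α hα)) (hcon α hα)
    obtain ⟨y, hy, hxy⟩ :=
      (hlevel_comp α).exists_infDist_eq_dist (hlevel_ne α (by linarith [hα.2])) x
    exact ⟨y, hy, by rw [← hxy]; exact h1⟩
  have key2 : ∀ α ∈ Icc (0:ℝ) (1 - ε), ∀ y ∈ u.level α, ∃ x ∈ K, dist y x ≤ ε := by
    intro α hα y hy
    have hfin' : EMetric.hausdorffEdist (u.level α) K ≠ ⊤ := by
      rw [EMetric.hausdorffEdist, EMetric.hausdorffEdist_comm]; exact hfin α hα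
    have h1 : infDist y K ≤ ε := by
      refine le_trans (infDist_le_hausdorffDist_of_mem hy hfin') ?_
      rw [hausdorffDist_comm]; exact hcon α hα
    obtain ⟨x, hx, hyx⟩ := hK.exists_infDist_eq_dist hKne y
    exact ⟨x, hx, by rw [← hyx]; exact h1⟩
  have hle : hausdorffDist (K ×ˢ Icc (0 : ℝ) 1) u.sendograph ≤ ε := by
    apply hausdorffDist_le_of_mem_dist hε.le
    · rintro ⟨x, t⟩ ⟨hx, ht0, ht1⟩
      have hαmem : min t (1 - ε) ∈ Icc (0:ℝ) (1 - ε) :=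
        ⟨le_min ht0 (by linarith), min_le_right _ _⟩
      obtain ⟨y, hy, hxy⟩ := key1 _ hαmem x hx
      refine ⟨(y, min t (u.toFun y)),
        ⟨hlevel_sub _ hy, le_min ht0 (hlb y), min_le_right _ _⟩, ?_⟩
      rw [Prod.dist_eq]
      refine max_le hxy ?_
      rw [Real.dist_eq]
      have htu : t - u.toFun y ≤ ε := by
        rcases le_or_gt t 0 with h0 | h0
        · have := hlb y; linarith
        · have hαpos : 0 < min t (1 - ε) := lt_min h0 (by linarith)
          have hy' : min t (1 - ε) ≤ u.toFun y := by
            unfold NormalFuzzySet.level at hy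
            rwa [if_neg (not_le.mpr hαpos)] at hy
          have h2 : t - ε ≤ min t (1 - ε) := le_min (by linarith) (by linarith)
          linarith
      rcases le_total t (u.toFun y) with h | h
      · rw [min_eq_left h, sub_self, abs_zero]; exact hε.le
      · rw [min_eq_right h, abs_of_nonneg (by linarith)]; exact htu
    · rintro ⟨y, s⟩ ⟨hyS, hs0, hsu⟩
      have hαmem : min s (1 - ε) ∈ Icc (0:ℝ) (1 - ε) :=
        ⟨le_min hs0 (by linarith), min_le_right _ _⟩
      have hyl : y ∈ u.level (min s (1 - ε)) := by
        unfold NormalFuzzySet.level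
        split
        · exact hyS
        · exact le_trans (min_le_left _ _) hsu
      obtain ⟨x, hx, hyx⟩ := key2 _ hαmem y hyl
      refine ⟨(x, min s (1 - ε)), ⟨hx, hαmem.1, by linarith [hαmem.2]⟩, ?_⟩
      simp only at hs0 hsu
      rw [Prod.dist_eq]
      refine max_le (by simpa [dist_comm] using hyx) ?_
      simp only [Real.dist_eq]
      have hsb : s ≤ 1 := le_trans hsu (hub y)
      rcases le_total s (1 - ε) with h | h
      · rw [min_eq_left h, sub_self, abs_zero]; exact hε.le
      · rw [min_eq_right h, abs_of_nonneg (by linarith)]; linarith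
  linarith
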